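/- Let H^α_{x,U} be the Hjorth invariant functions. For all (x,U), (y,V), (z,W) in X × T* and β < α: F^α_{x,U}(F^β_{y,V}, β) = H^α_{x,U}(y,V,β); moreover F^α_{x,U} = F^α_{z,W} if and only if H^α_{x,U} = H^α_{z,W}. -/

import Mathlib

noncomputable section

open scoped Classical

universe u

variable {G X : Type u} [TopologicalSpace G] [Group G] [IsTopologicalGroup G]
  [TopologicalSpace X] [MulAction G X] [ContinuousSMul G X]

/-- The closure of the partial orbit `U · x`. -/
def orbCl (U : Set G) (x : X) : Set X :=
  closure ((fun g : G => g • x) '' U)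

/-- Hjorth's invariant functions `H^α_{x,U}`, represented as a pair consisting of
`I_{x,U}(0) = closure (U·x)` together with the map sending a triple `((y,V),β)` with
`V ∈ T*` and `β < α` to the value (`some true` for `1`, `some false` for `0`) of
`H^α_{x,U}(y,V,β)`, and `none` outside the domain.  `H^{β+1}_{x,U}(y,V,β) = 1` iff
there is a nonempty open `U' ⊆ U` with `H^β_{x,U'} = H^β_{y,V}`; the restriction
property `H^α_{x,U} ↾ β = H^β_{x,U}` holds by construction. -/
noncomputable def hH (α : Ordinal.{u}) (x : X) (U : Set G) :
    Set X × ((X × Set G) × Ordinal.{u} → Option Bool) :=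
  ⟨orbCl U x,
    fun q =>
      if h : q.2 < α ∧ IsOpen q.1.2 ∧ q.1.2.Nonempty then
        some (if (∃ U' : Set G, IsOpen U' ∧ U'.Nonempty ∧ U' ⊆ U ∧
            hH q.2 x U' = hH q.2 q.1.1 q.1.2) then true else false)
      else none⟩
termination_by α
decreasing_by all_goals exact h.1

/-- The type of the invariant functions `F^α`: an `F^α`-invariant consists of the
base value `closure (U·x)` together with a map sending pairs `(w, β)` with `β < α`
and `w` in the type of `F^β`-invariants to `some true`/`some false` (the values `1`/`0`),
or `none` for arguments outside the domain. -/
noncomputable def FT (X G : Type u) : Ordinal.{u} → Type (u + 1) :=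
  Ordinal.lt_wf.fix fun α ih =>
    Set X × ((Σ β : {b : Ordinal.{u} // b < α}, ih β.1 β.2) → Option Bool)

theorem FT_eq (X G : Type u) (α : Ordinal.{u}) :
    FT X G α =
      (Set X × ((Σ β : {b : Ordinal.{u} // b < α}, FT X G β.1) → Option Bool)) := by
  rw [FT, WellFounded.fix_eq]

/-- Hjorth's recursive invariants `F^α_{x,U}`: the base value is `closure (U·x)`, and
for `β < α` the value at `(F^β_{y,V}, β)` (for `(y,V) ∈ X × T*`) is `1` iff there is a
nonempty open `U' ⊆ U` with `F^β_{x,U'} = F^β_{y,V}`; arguments that are not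
`F^β`-invariants of pairs from `X × T*` are outside the domain (`none`). -/
noncomputable def hF (α : Ordinal.{u}) (x : X) (U : Set G) : FT X G α :=
  cast (FT_eq X G α).symm
    (⟨orbCl U x,
      fun p =>
        if (∃ (y : X) (V : Set G), IsOpen V ∧ V.Nonempty ∧ p.2 = hF p.1.1 y V) then
          some (if (∃ U' : Set G, IsOpen U' ∧ U'.Nonempty ∧ U' ⊆ U ∧
              hF p.1.1 x U' = p.2) then true else false)
        else none⟩ :
      Set X × ((Σ β : {b : Ordinal.{u} // b < α}, FT X G β.1) → Option Bool))
termination_by α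
decreasing_by all_goals exact p.1.2

lemma hH_fst (α : Ordinal.{u}) (x : X) (U : Set G) : (hH α x U).1 = orbCl U x := by
  rw [hH]

lemma hH_snd (α : Ordinal.{u}) (x : X) (U : Set G) (q : (X × Set G) × Ordinal.{u}) :
    (hH α x U).2 q =
      if h : q.2 < α ∧ IsOpen q.1.2 ∧ q.1.2.Nonempty then
        some (if (∃ U' : Set G, IsOpen U' ∧ U'.Nonempty ∧ U' ⊆ U ∧
            hH q.2 x U' = hH q.2 q.1.1 q.1.2) then true else false)
      else none := by
  conv_lhs => rw [hH]

lemma hF_def (α : Ordinal.{u}) (x : X) (U : Set G) :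
    cast (FT_eq X G α) (hF α x U) =
      (⟨orbCl U x,
        fun p =>
          if (∃ (y : X) (V : Set G), IsOpen V ∧ V.Nonempty ∧ p.2 = hF p.1.1 y V) then
            some (if (∃ U' : Set G, IsOpen U' ∧ U'.Nonempty ∧ U' ⊆ U ∧
                hF p.1.1 x U' = p.2) then true else false)
          else none⟩ :
        Set X × ((Σ β : {b : Ordinal.{u} // b < α}, FT X G β.1) → Option Bool)) := by
  conv_lhs => rw [hF]
  rw [cast_cast, cast_eq]


lemma ite_bool_eq_iff {P Q : Prop} [Decidable P] [Decidable Q] :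
    (if P then true else false) = (if Q then true else false) ↔ (P ↔ Q) := by
  by_cases hP : P <;> by_cases hQ : Q <;> simp [hP, hQ]

lemma hF_iff_hH (α : Ordinal.{u}) : ∀ (x z : X) (U W : Set G), IsOpen U → U.Nonempty →
    IsOpen W → W.Nonempty → (hF α x U = hF α z W ↔ hH α x U = hH α z W) := by
  induction α using Ordinal.induction with
  | h α IH =>
  intro x z U W hU hUne hW hWne
  have conv1 : ∀ (β : Ordinal.{u}), β < α → ∀ (a b : X) (S V : Set G), IsOpen V →
      V.Nonempty →
      ((∃ U' : Set G, IsOpen U' ∧ U'.Nonempty ∧ U' ⊆ S ∧ hF β a U' = hF β b V) ↔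
        (∃ U' : Set G, IsOpen U' ∧ U'.Nonempty ∧ U' ⊆ S ∧ hH β a U' = hH β b V)) :=
    fun β hβ a b S V hVo hVne =>
      exists_congr fun U' => and_congr_right fun ho => and_congr_right fun hne =>
        and_congr_right fun _ => IH β hβ a b U' V ho hne hVo hVne
  constructor
  · intro h
    have hc : cast (FT_eq X G α) (hF α x U) = cast (FT_eq X G α) (hF α z W) := by rw [h]
    rw [hF_def, hF_def] at hc
    have h1 : orbCl U x = orbCl W z := congrArg Prod.fst hc
    have h2 := congrArg Prod.snd hc
    apply Prod.ext
    · rw [hH_fst, hH_fst]; exact h1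
    · funext q
      rw [hH_snd, hH_snd]
      by_cases hq : q.2 < α ∧ IsOpen q.1.2 ∧ q.1.2.Nonempty
      · rw [dif_pos hq, dif_pos hq]
        congr 1
        rw [ite_bool_eq_iff]
        have h3 := congrFun h2 ⟨⟨q.2, hq.1⟩, hF q.2 q.1.1 q.1.2⟩
        simp only [] at h3
        have hcond : ∃ (y' : X) (V' : Set G), IsOpen V' ∧ V'.Nonempty ∧
            hF q.2 q.1.1 q.1.2 = hF q.2 y' V' := ⟨q.1.1, q.1.2, hq.2.1, hq.2.2, rfl⟩
        rw [if_pos hcond, if_pos hcond] at h3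
        have h4 := ite_bool_eq_iff.mp (Option.some.inj h3)
        rw [← conv1 q.2 hq.1 x q.1.1 U q.1.2 hq.2.1 hq.2.2,
          ← conv1 q.2 hq.1 z q.1.1 W q.1.2 hq.2.1 hq.2.2]
        exact h4
      · rw [dif_neg hq, dif_neg hq]
  · intro h
    have h1 : orbCl U x = orbCl W z := by
      have := congrArg Prod.fst h; rwa [hH_fst, hH_fst] at this
    have hcast : cast (FT_eq X G α) (hF α x U) = cast (FT_eq X G α) (hF α z W) → 
        hF α x U = hF α z W := fun hc => by
      have := congrArg (cast (FT_eq X G α).symm) hc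
      rwa [cast_cast, cast_eq, cast_cast, cast_eq] at this
    apply hcast
    rw [hF_def, hF_def]
    refine Prod.ext h1 ?_
    funext p
    obtain ⟨⟨β, hβ⟩, w⟩ := p
    simp only []
    by_cases hc : ∃ (y : X) (V : Set G), IsOpen V ∧ V.Nonempty ∧ w = hF β y V
    · rw [if_pos hc, if_pos hc]
      obtain ⟨y, V, hVo, hVne, rfl⟩ := hc
      congr 1
      rw [ite_bool_eq_iff]
      have h2 := congrFun (congrArg Prod.snd h) ((y, V), β)
      rw [hH_snd, hH_snd, dif_pos ⟨hβ, hVo, hVne⟩, dif_pos ⟨hβ, hVo, hVne⟩] at h2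
      have h4 := ite_bool_eq_iff.mp (Option.some.inj h2)
      rw [conv1 β hβ x y U V hVo hVne, conv1 β hβ z y W V hVo hVne]
      exact h4
    · rw [if_neg hc, if_neg hc]

/-- Relation between the `F`- and `H`-invariants: for `β < α` and `(y,V) ∈ X × T*`,
`F^α_{x,U}(F^β_{y,V}, β) = H^α_{x,U}(y,V,β)`; moreover `F^α_{x,U} = F^α_{z,W}` iff
`H^α_{x,U} = H^α_{z,W}`. -/
theorem hF_hH (α β : Ordinal.{u}) (hβ : β < α) (x y z : X) (U V W : Set G)
    (hU : IsOpen U) (hUne : U.Nonempty) (hV : IsOpen V) (hVne : V.Nonempty)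
    (hW : IsOpen W) (hWne : W.Nonempty) :
    ((cast (FT_eq X G α) (hF α x U)).2 ⟨⟨β, hβ⟩, hF β y V⟩ =
        (hH α x U).2 ((y, V), β)) ∧
      (hF α x U = hF α z W ↔ hH α x U = hH α z W) := by
  refine ⟨?_, hF_iff_hH α x z U W hU hUne hW hWne⟩
  rw [hF_def]
  simp only []
  have hcond : ∃ (y' : X) (V' : Set G), IsOpen V' ∧ V'.Nonempty ∧
      hF β y V = hF β y' V' := ⟨y, V, hV, hVne, rfl⟩
  rw [if_pos hcond, hH_snd]
  have hq : ((((y, V), β) : (X × Set G) × Ordinal.{u}).2 < α ∧ IsOpen (((y, V), β) : (X × Set G) × Ordinal.{u}).1.2 ∧ (((y, V), β) : (X × Set G) × Ordinal.{u}).1.2.Nonempty) := ⟨hβ, hV, hVne⟩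
  rw [dif_pos hq]
  congr 1
  rw [ite_bool_eq_iff]
  exact exists_congr fun U' => and_congr_right fun ho => and_congr_right fun hne =>
    and_congr_right fun _ => hF_iff_hH β x y U' V ho hne hV hVne

end
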